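/- Let G be a 4-regular graph on n vertices such that every vertex cover of G has size at least α_max·n, and let G' be the graph obtained by subdividing each edge of E₁ = E(G) \ E₂ (|E₂| = n, a cut) into a path of length 3. Then every vertex cover of G' has size at least (α_max + 1)·n. -/

import Mathlib

/-- A set `S` of vertices covers every edge of `G`. -/
def IsVertexCover {V : Type*} (G : SimpleGraph V) (S : Set V) : Prop :=
  ∀ ⦃u v : V⦄, G.Adj u v → u ∈ S ∨ v ∈ S

/-- The graph `G'` obtained from `G` by replacing each (oriented) edge
`(u, v) ∈ E₁` with the length-3 path `u — v'_{e,u} — v'_{e,v} — v`,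
where `v'_{e,u} = inr ((u,v), false)` and `v'_{e,v} = inr ((u,v), true)`. -/
def subdividedGraph {V : Type*} [DecidableEq V] (G : SimpleGraph V)
    (E₁ : Finset (V × V)) : SimpleGraph (V ⊕ (V × V) × Bool) :=
  SimpleGraph.fromRel (fun x y =>
    match x, y with
    | .inl u, .inl v => G.Adj u v ∧ ∀ p ∈ E₁, ¬(p = (u, v) ∨ p = (v, u))
    | .inl u, .inr (p, b) => p ∈ E₁ ∧ ((b = false ∧ u = p.1) ∨ (b = true ∧ u = p.2))
    | .inr (p, b), .inr (p', b') => p ∈ E₁ ∧ p = p' ∧ b ≠ b'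
    | _, _ => False)

/-- Soundness: if every vertex cover of the 4-regular graph `G` on `n` vertices has
size at least `αmax · n`, then every vertex cover of the graph obtained by subdividing
the `n` edges of `E₁ = E(G) \ E₂` into length-3 paths has size at least `(αmax + 1) · n`. -/
theorem subdivided_vertex_cover_soundness {V : Type*} [Fintype V] [DecidableEq V]
    (G : SimpleGraph V) [DecidableRel G.Adj]
    (hreg : ∀ v : V, G.degree v = 4)
    (E₁ : Finset (V × V))
    (hE₁adj : ∀ p ∈ E₁, G.Adj p.1 p.2)
    (hE₁inj : Set.InjOn (fun p : V × V => s(p.1, p.2)) ↑E₁)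
    (hE₁card : E₁.card = Fintype.card V)
    (αmax : ℝ)
    (hvc : ∀ S : Set V, IsVertexCover G S → αmax * (Fintype.card V : ℝ) ≤ (S.ncard : ℝ)) :
    ∀ T : Set (V ⊕ (V × V) × Bool), IsVertexCover (subdividedGraph G E₁) T →
      (αmax + 1) * (Fintype.card V : ℝ) ≤ (T.ncard : ℝ) := by
  classical
  intro T hT
  -- adjacency facts in the subdivided graph
  have hadj_mid : ∀ p ∈ E₁, (subdividedGraph G E₁).Adj (.inr (p, false)) (.inr (p, true)) :=
    fun p hp => ⟨by simp, Or.inl ⟨hp, rfl, by simp⟩⟩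
  have hadj_left : ∀ p ∈ E₁, (subdividedGraph G E₁).Adj (.inl p.1) (.inr (p, false)) :=
    fun p hp => ⟨by simp, Or.inl ⟨hp, Or.inl ⟨rfl, rfl⟩⟩⟩
  have hadj_right : ∀ p ∈ E₁, (subdividedGraph G E₁).Adj (.inl p.2) (.inr (p, true)) :=
    fun p hp => ⟨by simp, Or.inl ⟨hp, Or.inr ⟨rfl, rfl⟩⟩⟩
  have hadj_dir : ∀ u v : V, G.Adj u v → (∀ p ∈ E₁, ¬(p = (u, v) ∨ p = (v, u))) →
      (subdividedGraph G E₁).Adj (.inl u) (.inl v) :=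
    fun u v h hno => ⟨by simpa using h.ne, Or.inl ⟨h, hno⟩⟩
  set S₀ : Finset V := Finset.univ.filter (fun u => Sum.inl u ∈ T) with hS₀def
  set B : Finset (V × V) :=
    E₁.filter (fun p => Sum.inr (p, false) ∈ T ∧ Sum.inr (p, true) ∈ T) with hBdef
  set S : Set V := ↑(S₀ ∪ B.image Prod.fst) with hSdef
  have hmem1 : ∀ u : V, Sum.inl u ∈ T → u ∈ S := by
    intro u hu
    have : u ∈ S₀ := by simp [hS₀def, hu]
    exact Finset.mem_coe.mpr (Finset.mem_union_left _ this)
  have hmem2 : ∀ p ∈ B, p.1 ∈ S := fun p hp =>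
    Finset.mem_coe.mpr (Finset.mem_union_right _ (Finset.mem_image_of_mem _ hp))
  -- S is a vertex cover of G
  have hScover : IsVertexCover G S := by
    intro u v huv
    by_cases hex : ∃ p ∈ E₁, p = (u, v) ∨ p = (v, u)
    · obtain ⟨p, hp, hpe⟩ := hex
      have hmid := hT (hadj_mid p hp)
      by_cases hfa : Sum.inr (p, false) ∈ T
      · by_cases hfb : Sum.inr (p, true) ∈ T
        · have hpB : p ∈ B := by simp [hBdef, hp, hfa, hfb]
          rcases hpe with rfl | rfl
          · exact Or.inl (hmem2 _ hpB)
          · exact Or.inr (hmem2 _ hpB)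
        · -- true-vertex not in T, so inl p.2 ∈ T
          have := hT (hadj_right p hp)
          have h2 : Sum.inl p.2 ∈ T := by tauto
          rcases hpe with rfl | rfl
          · exact Or.inr (hmem1 _ h2)
          · exact Or.inl (hmem1 _ h2)
      · have := hT (hadj_left p hp)
        have h1 : Sum.inl p.1 ∈ T := by tauto
        rcases hpe with rfl | rfl
        · exact Or.inl (hmem1 _ h1)
        · exact Or.inr (hmem1 _ h1)
    · push_neg at hex
      have hno : ∀ p ∈ E₁, ¬(p = (u, v) ∨ p = (v, u)) :=
        fun p hp h => h.elim (hex p hp).1 (hex p hp).2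
      have := hT (hadj_dir u v huv hno)
      rcases this with h | h
      · exact Or.inl (hmem1 _ h)
      · exact Or.inr (hmem1 _ h)
  -- counting
  have hTfin : T.Finite := Set.toFinite T
  set Tf : Finset (V ⊕ (V × V) × Bool) := hTfin.toFinset with hTfdef
  have hTcard : T.ncard = Tf.card := Set.ncard_eq_toFinset_card _ hTfin
  set Z : Finset ((V × V) × Bool) :=
    (E₁ ×ˢ (Finset.univ : Finset Bool)).filter (fun pb => Sum.inr pb ∈ T) with hZdef
  -- Z has at least |E₁| + |B| elements
  have hBsub : B ⊆ E₁ := Finset.filter_subset _ _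
  have hZcard : E₁.card + B.card ≤ Z.card := by
    have hfib : Z.card = ∑ p ∈ E₁, (Z.filter (fun x => x.1 = p)).card := by
      apply Finset.card_eq_sum_card_fiberwise
      intro x hx
      exact (Finset.mem_product.mp (Finset.mem_filter.mp hx).1).1
    have hone : ∀ p ∈ E₁, 1 ≤ (Z.filter (fun x => x.1 = p)).card := by
      intro p hp
      rcases hT (hadj_mid p hp) with h | h
      · exact Finset.card_pos.mpr ⟨(p, false), by simp [hZdef, hp, h]⟩
      · exact Finset.card_pos.mpr ⟨(p, true), by simp [hZdef, hp, h]⟩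
    have htwo : ∀ p ∈ B, 2 ≤ (Z.filter (fun x => x.1 = p)).card := by
      intro p hp
      obtain ⟨hp1, hfa, hfb⟩ := Finset.mem_filter.mp hp
      have hsub : ({(p, false), (p, true)} : Finset ((V × V) × Bool)) ⊆
          Z.filter (fun x => x.1 = p) := by
        intro x hx
        rcases Finset.mem_insert.mp hx with rfl | hx
        · simp [hZdef, hp1, hfa]
        · rw [Finset.mem_singleton] at hx; subst hx; simp [hZdef, hp1, hfb]
      calc (2 : ℕ) = ({(p, false), (p, true)} : Finset ((V × V) × Bool)).card := by
            rw [Finset.card_pair (by simp)]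
        _ ≤ _ := Finset.card_le_card hsub
    have hsplit : ∑ p ∈ E₁ \ B, (Z.filter (fun x => x.1 = p)).card
        + ∑ p ∈ B, (Z.filter (fun x => x.1 = p)).card
        = ∑ p ∈ E₁, (Z.filter (fun x => x.1 = p)).card :=
      Finset.sum_sdiff hBsub
    have hsd : (E₁ \ B).card + B.card = E₁.card := Finset.card_sdiff_add_card_eq_card hBsub
    have h1 : (E₁ \ B).card ≤ ∑ p ∈ E₁ \ B, (Z.filter (fun x => x.1 = p)).card := by
      calc (E₁ \ B).card = ∑ _p ∈ E₁ \ B, 1 := by simp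
        _ ≤ _ := Finset.sum_le_sum (fun p hp => hone p (Finset.mem_sdiff.mp hp).1)
    have h2 : 2 * B.card ≤ ∑ p ∈ B, (Z.filter (fun x => x.1 = p)).card := by
      calc 2 * B.card = ∑ _p ∈ B, 2 := by rw [Finset.sum_const]; ring
        _ ≤ _ := Finset.sum_le_sum htwo
    omega
  -- Tf contains the images of S₀ and Z
  have hfinal : S₀.card + Z.card ≤ Tf.card := by
    have hXsub : S₀.image Sum.inl ⊆ Tf := by
      intro x hx
      obtain ⟨u, hu, rfl⟩ := Finset.mem_image.mp hx
      exact hTfin.mem_toFinset.mpr (by simpa [hS₀def] using hu)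
    have hYsub : Z.image (Sum.inr : (V × V) × Bool → V ⊕ (V × V) × Bool) ⊆ Tf := by
      intro x hx
      obtain ⟨pb, hpb, rfl⟩ := Finset.mem_image.mp hx
      exact hTfin.mem_toFinset.mpr (Finset.mem_filter.mp hpb).2
    have hdisj : Disjoint (S₀.image Sum.inl)
        (Z.image (Sum.inr : (V × V) × Bool → V ⊕ (V × V) × Bool)) := by
      rw [Finset.disjoint_left]
      intro x hx hy
      obtain ⟨u, _, rfl⟩ := Finset.mem_image.mp hx
      obtain ⟨pb, _, h⟩ := Finset.mem_image.mp hy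
      cases h
    calc S₀.card + Z.card
        = (S₀.image Sum.inl).card + (Z.image Sum.inr).card := by
          rw [Finset.card_image_of_injective _ Sum.inl_injective,
            Finset.card_image_of_injective _ Sum.inr_injective]
      _ = (S₀.image Sum.inl ∪ Z.image Sum.inr).card :=
          (Finset.card_union_of_disjoint hdisj).symm
      _ ≤ Tf.card := Finset.card_le_card (Finset.union_subset hXsub hYsub)
  have hSle : S.ncard ≤ S₀.card + B.card := by
    rw [hSdef, Set.ncard_coe_finset]
    calc (S₀ ∪ B.image Prod.fst).card ≤ S₀.card + (B.image Prod.fst).card :=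
          Finset.card_union_le _ _
      _ ≤ S₀.card + B.card := by
          exact Nat.add_le_add_left (Finset.card_image_le) _
  -- combine
  have key : S.ncard + Fintype.card V ≤ T.ncard := by
    rw [hTcard]
    have := hE₁card
    omega
  have h1 := hvc S hScover
  have key' : (S.ncard : ℝ) + (Fintype.card V : ℝ) ≤ (T.ncard : ℝ) := by
    exact_mod_cast key
  nlinarith [h1, key']
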